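/- For the quaternionic cross ratio 𝕏(z₁, z₂, z₃, z₄) = ⟨z₃, z₁⟩⟨z₃, z₂⟩⁻¹⟨z₄, z₂⟩⟨z₄, z₁⟩⁻¹, replacing the lifts zᵢ by zᵢ·λᵢ with λᵢ ∈ ℍ \ {0} changes 𝕏 within its similarity class up to real scaling; in particular, the real part divided by the norm, Re(𝕏)/|𝕏|, is independent of the chosen lifts. -/

import Mathlib

open Matrix

/-- The quaternionic Hermitian pairing `⟨z, w⟩ = w* H z`. -/
noncomputable def qherm {n : ℕ} (H : Matrix (Fin n) (Fin n) (Quaternion ℝ))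
    (z w : Fin n → Quaternion ℝ) : Quaternion ℝ :=
  dotProduct (star w) (H.mulVec z)

/-- The quaternionic cross ratio `𝕏(z₁,z₂,z₃,z₄) = ⟨z₃,z₁⟩⟨z₃,z₂⟩⁻¹⟨z₄,z₂⟩⟨z₄,z₁⟩⁻¹`
(the order of the factors matters over `ℍ`). -/
noncomputable def qcrossRatio {n : ℕ} (H : Matrix (Fin n) (Fin n) (Quaternion ℝ))
    (z₁ z₂ z₃ z₄ : Fin n → Quaternion ℝ) : Quaternion ℝ :=
  qherm H z₃ z₁ * (qherm H z₃ z₂)⁻¹ * qherm H z₄ z₂ * (qherm H z₄ z₁)⁻¹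

lemma qherm_smul {n : ℕ} (H : Matrix (Fin n) (Fin n) (Quaternion ℝ))
    (z w : Fin n → Quaternion ℝ) (a b : Quaternion ℝ) :
    qherm H (fun j => z j * a) (fun j => w j * b) = star b * qherm H z w * a := by
  simp only [qherm, dotProduct, mulVec, Pi.star_apply, StarMul.star_mul, Finset.mul_sum,
    Finset.sum_mul]
  refine Finset.sum_congr rfl fun i _ => ?_
  refine Finset.sum_congr rfl fun j _ => ?_
  simp [mul_assoc]

lemma re_mul_comm (a b : Quaternion ℝ) : (a * b).re = (b * a).re := by
  simp [Quaternion.re_mul]; ring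

/-- Replacing the lifts `zᵢ` by `zᵢ·λᵢ` changes the quaternionic cross ratio
within its similarity class up to positive real scaling; in particular `Re(𝕏)/|𝕏|` is
independent of the chosen lifts. -/
theorem qcrossRatio_lift_similarity (n : ℕ)
    (H : Matrix (Fin (n + 1)) (Fin (n + 1)) (Quaternion ℝ)) (hHerm : Hᴴ = H)
    (z₁ z₂ z₃ z₄ : Fin (n + 1) → Quaternion ℝ)
    (hnull₁ : qherm H z₁ z₁ = 0) (hnull₂ : qherm H z₂ z₂ = 0)
    (hnull₃ : qherm H z₃ z₃ = 0) (hnull₄ : qherm H z₄ z₄ = 0)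
    (h32 : qherm H z₃ z₂ ≠ 0) (h41 : qherm H z₄ z₁ ≠ 0)
    (hX : qcrossRatio H z₁ z₂ z₃ z₄ ≠ 0)
    (lam₁ lam₂ lam₃ lam₄ : Quaternion ℝ)
    (h1 : lam₁ ≠ 0) (h2 : lam₂ ≠ 0) (h3 : lam₃ ≠ 0) (h4 : lam₄ ≠ 0) :
    (∃ r : ℝ, 0 < r ∧ ∃ q : Quaternion ℝ, q ≠ 0 ∧
        qcrossRatio H (fun j => z₁ j * lam₁) (fun j => z₂ j * lam₂)
            (fun j => z₃ j * lam₃) (fun j => z₄ j * lam₄) =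
          r • (q⁻¹ * qcrossRatio H z₁ z₂ z₃ z₄ * q)) ∧
      (qcrossRatio H (fun j => z₁ j * lam₁) (fun j => z₂ j * lam₂)
            (fun j => z₃ j * lam₃) (fun j => z₄ j * lam₄)).re /
          ‖qcrossRatio H (fun j => z₁ j * lam₁) (fun j => z₂ j * lam₂)
            (fun j => z₃ j * lam₃) (fun j => z₄ j * lam₄)‖ =
        (qcrossRatio H z₁ z₂ z₃ z₄).re / ‖qcrossRatio H z₁ z₂ z₃ z₄‖ := by

  set a := qherm H z₃ z₁ with ha
  set b := qherm H z₃ z₂ with hb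
  set c := qherm H z₄ z₂ with hc
  set d := qherm H z₄ z₁ with hd
  have hs1 : star lam₁ ≠ 0 := star_ne_zero.mpr h1
  have key : qcrossRatio H (fun j => z₁ j * lam₁) (fun j => z₂ j * lam₂)
      (fun j => z₃ j * lam₃) (fun j => z₄ j * lam₄) =
      star lam₁ * qcrossRatio H z₁ z₂ z₃ z₄ * (star lam₁)⁻¹ := by
    simp only [qcrossRatio, qherm_smul, ← ha, ← hb, ← hc, ← hd]
    simp [_root_.mul_inv_rev, mul_assoc, mul_inv_cancel_left₀, inv_mul_cancel_left₀,
      h1, h2, h3, h4, h32, h41, hs1, star_ne_zero]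
  constructor
  · exact ⟨1, one_pos, (star lam₁)⁻¹, inv_ne_zero hs1, by
      simpa [inv_inv] using key⟩
  · rw [key]
    have hre : (star lam₁ * qcrossRatio H z₁ z₂ z₃ z₄ * (star lam₁)⁻¹).re =
        (qcrossRatio H z₁ z₂ z₃ z₄).re := by
      rw [re_mul_comm, ← mul_assoc, inv_mul_cancel₀ hs1, one_mul]
    have hnorm : ‖star lam₁ * qcrossRatio H z₁ z₂ z₃ z₄ * (star lam₁)⁻¹‖ =
        ‖qcrossRatio H z₁ z₂ z₃ z₄‖ := by
      rw [norm_mul, norm_mul, norm_inv]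
      have : ‖star lam₁‖ ≠ 0 := norm_ne_zero_iff.mpr hs1
      have h1' : ‖lam₁‖ ≠ 0 := norm_ne_zero_iff.mpr h1
      field_simp
    rw [hre, hnorm]
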